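/- With Y multiplication by x, Z the formal derivative on ℂ[x], H = Y∘Z, G = R(H)∘Z for a fixed polynomial R of degree d, S(X) = R(X−1)·X, and P_n^R = e^G(x^n) (with the convention P_m^R = 0 for m < 0): the polynomials P_n^R satisfy the (d+2)-term recurrence relation x·P_n^R = P_{n+1}^R + Σ_{j=1}^{d+1} c_j(n)·P_{n−j+1}^R, where c_j(n) = ((−1)^j / j!) · (∏_{k=1}^{j−1} (n−k+1)·R(n−k)) · (Δ^j S)(n−j+1) and Δ^j S denotes the j-th iterated forward difference (ΔS)(X) = S(X+1) − S(X). -/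

import Mathlib

open Polynomial Finset

noncomputable section

/-- `E` is the ℂ-algebra of ℂ-linear endomorphisms of `ℂ[x]`. -/
abbrev E := Module.End ℂ (Polynomial ℂ)

/-- `Y`: multiplication by `x`. -/
def Yop : E := LinearMap.mulLeft ℂ (X : Polynomial ℂ)

/-- `Z`: the formal derivative. -/
def Zop : E := Polynomial.derivative

/-- `H = Y ∘ Z`. -/
def Hop : E := Yop * Zop

/-- `G = R(H) ∘ Z`. -/
def Gop (R : Polynomial ℂ) : E := aeval Hop R * Zop

/-- Forward difference of a polynomial: `(Δf)(X) = f(X+1) − f(X)`. -/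
def fdiff (S : Polynomial ℂ) : Polynomial ℂ := S.comp (X + 1) - S

/-- `S(X) = R(X−1)·X`. -/
def Spol (R : Polynomial ℂ) : Polynomial ℂ := R.comp (X - 1) * X

/-- `P_n^R = e^G(x^n)`, the exponential series being a finite sum
(all terms with `j > n` vanish). -/
def PR (R : Polynomial ℂ) (n : ℕ) : Polynomial ℂ :=
  ∑ j ∈ range (n + 1), (j.factorial : ℂ)⁻¹ • ((Gop R) ^ j) (X ^ n : Polynomial ℂ)

/-- `P_m^R` extended to integer indices by `P_m^R = 0` for `m < 0`. -/
def PRz (R : Polynomial ℂ) (m : ℤ) : Polynomial ℂ :=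
  if m < 0 then 0 else PR R m.toNat

/-- The recurrence coefficient
`c_j(n) = ((−1)^j / j!) · (∏_{k=1}^{j−1} (n−k+1)·R(n−k)) · (Δ^j S)(n−j+1)`. -/
def cCoeff (R : Polynomial ℂ) (j n : ℕ) : ℂ :=
  ((-1 : ℂ) ^ j / (j.factorial : ℂ))
    * (∏ k ∈ Icc 1 (j - 1), (((n : ℂ) - k + 1) * R.eval ((n : ℂ) - k)))
    * (fdiff^[j] (Spol R)).eval ((n : ℂ) - j + 1)

-- ==================== auxiliary material ====================

/-- `S` evaluated at a natural number. -/
def Sv (R : Polynomial ℂ) (t : ℕ) : ℂ := (Spol R).eval (t : ℂ)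

lemma Sv_zero (R : Polynomial ℂ) : Sv R 0 = 0 := by simp [Sv, Spol]

lemma Hop_monomial (m : ℕ) : Hop (X ^ m : Polynomial ℂ) = (m : ℂ) • X ^ m := by
  show Yop (Zop (X ^ m)) = _
  cases m with
  | zero => simp [Yop, Zop]
  | succ m =>
    simp only [Yop, Zop, LinearMap.coe_mk, derivative_X_pow,
      LinearMap.mulLeft_apply, smul_eq_C_mul]
    push_cast
    ring

lemma Hpow_monomial (i m : ℕ) : (Hop ^ i) (X ^ m : Polynomial ℂ) = ((m : ℂ) ^ i) • X ^ m := by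
  induction i with
  | zero => simp
  | succ i ih =>
    rw [pow_succ', Module.End.mul_apply, ih, map_smul, Hop_monomial, smul_smul, ← pow_succ]

lemma aevalH_monomial (R : Polynomial ℂ) (m : ℕ) :
    (aeval Hop R) (X ^ m : Polynomial ℂ) = R.eval (m : ℂ) • X ^ m := by
  rw [aeval_eq_sum_range, eval_eq_sum_range, LinearMap.sum_apply, Finset.sum_smul]
  refine Finset.sum_congr rfl fun i _ => ?_
  rw [LinearMap.smul_apply, Hpow_monomial, smul_smul]

lemma Gop_monomial (R : Polynomial ℂ) (m : ℕ) :
    (Gop R) (X ^ (m + 1) : Polynomial ℂ) = Sv R (m + 1) • X ^ m := by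
  show (aeval Hop R) (Zop (X ^ (m+1))) = _
  have h1 : Zop (X ^ (m+1) : Polynomial ℂ) = ((m : ℂ) + 1) • X ^ m := by
    simp [Zop, derivative_X_pow, smul_eq_C_mul]
  rw [h1, map_smul, aevalH_monomial, smul_smul]
  congr 1
  simp [Sv, Spol, eval_comp]
  ring

lemma Gpow_monomial (R : Polynomial ℂ) (j : ℕ) : ∀ n, j ≤ n →
    ((Gop R) ^ j) (X ^ n : Polynomial ℂ) = (∏ k ∈ range j, Sv R (n - k)) • X ^ (n - j) := by
  induction j with
  | zero => simp
  | succ j ih =>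
    intro n hn
    obtain ⟨m, rfl⟩ : ∃ m, n = m + 1 := ⟨n - 1, by omega⟩
    rw [pow_succ, Module.End.mul_apply, Gop_monomial, map_smul,
      ih m (by omega), smul_smul, prod_range_succ']
    have h1 : ∀ k, m - k = m + 1 - (k + 1) := fun k => by omega
    have h2 : m - j = m + 1 - (j + 1) := by omega
    have h3 : m + 1 - 0 = m + 1 := rfl
    rw [h2]
    congr 1
    rw [mul_comm, h3]
    refine congrArg (· * Sv R (m+1)) (prod_congr rfl fun k _ => ?_)
    rw [← h1]

/-- coefficients of `P_n^R` in the monomial basis -/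
def aco (R : Polynomial ℂ) (n m : ℕ) : ℂ :=
  (m.factorial : ℂ)⁻¹ * ∏ k ∈ range m, Sv R (n - k)

lemma PR_eq (R : Polynomial ℂ) (n : ℕ) :
    PR R n = ∑ m ∈ range (n + 1), aco R n m • X ^ (n - m) := by
  refine Finset.sum_congr rfl fun m hm => ?_
  rw [Gpow_monomial R m n (by simpa using Nat.lt_succ_iff.mp (mem_range.mp hm)),
    smul_smul, aco]

lemma fdiff_eval (S : Polynomial ℂ) (x : ℂ) : (fdiff S).eval x = S.eval (x+1) - S.eval x := by
  simp [fdiff, eval_comp]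

lemma newton (S : Polynomial ℂ) (m : ℕ) : ∀ (x : ℂ),
    S.eval (x - m) = ∑ j ∈ range (m+1),
      ((-1)^j * (m.choose j : ℂ)) * (fdiff^[j] S).eval (x - j) := by
  induction m with
  | zero => intro x; simp
  | succ m ih =>
    intro x
    set g : ℕ → ℂ := fun j => ((-1)^j * (m.choose j : ℂ)) * (fdiff^[j] S).eval (x - j) with hg
    set h : ℕ → ℂ := fun j => ((-1)^(j+1) * (m.choose j : ℂ)) * (fdiff^[j+1] S).eval (x - (j+1)) with hh
    set F : ℕ → ℂ := fun j => ((-1)^j * ((m+1).choose j : ℂ)) * (fdiff^[j] S).eval (x - j) with hF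
    have key : ∀ j : ℕ, (fdiff^[j] S).eval ((x - 1) - j)
        = (fdiff^[j] S).eval (x - j) - (fdiff^[j+1] S).eval (x - (j+1)) := by
      intro j
      rw [Function.iterate_succ_apply', fdiff_eval]
      push_cast
      ring_nf
    have h0 : S.eval (x - ((m:ℂ)+1)) = S.eval ((x - 1) - m) := by ring_nf
    have step1 : S.eval (x - (((m+1):ℕ):ℂ)) = ∑ j ∈ range (m+1), (g j + h j) := by
      push_cast
      rw [h0, ih (x - 1)]
      refine Finset.sum_congr rfl fun j _ => ?_
      rw [key j, hg, hh]
      ring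
    rw [step1, Finset.sum_add_distrib]
    have hgtop : g (m+1) = 0 := by simp [hg, Nat.choose_succ_self]
    have hsum_g : ∑ j ∈ range (m+1), g j = ∑ j ∈ range (m+2), g j := by
      rw [Finset.sum_range_succ g (m+1), hgtop, add_zero]
    rw [hsum_g, Finset.sum_range_succ' g (m+1), Finset.sum_range_succ' F (m+1)]
    have hF0 : F 0 = g 0 := by simp [hF, hg]
    have hstep : ∀ j ∈ range (m+1), g (j+1) + h j = F (j+1) := by
      intro j _
      simp only [hg, hh, hF, Nat.choose_succ_succ m j]
      push_cast
      ring
    rw [← Finset.sum_congr rfl hstep, Finset.sum_add_distrib, hF0]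
    ring

lemma fdiff_zero : fdiff 0 = 0 := by simp [fdiff]

lemma fdiff_small (p : Polynomial ℂ) :
    fdiff p = 0 ∨ (fdiff p).natDegree < p.natDegree := by
  by_cases h0 : p.natDegree = 0
  · left
    obtain ⟨c, rfl⟩ := natDegree_eq_zero.mp h0
    simp [fdiff]
  · by_cases hz : fdiff p = 0
    · exact Or.inl hz
    right
    have hp : p ≠ 0 := fun h => h0 (by simp [h])
    have hX1 : (X + 1 : Polynomial ℂ).natDegree = 1 := by
      simpa using natDegree_X_add_C (1 : ℂ)
    have hlc : (p.comp (X + 1)).leadingCoeff = p.leadingCoeff := by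
      rw [leadingCoeff_comp (by rw [hX1]; norm_num)]
      have : (X + 1 : Polynomial ℂ).leadingCoeff = 1 := by
        simpa using leadingCoeff_X_add_C (1 : ℂ)
      rw [this, one_pow, mul_one]
    have hnd : (p.comp (X + 1)).natDegree = p.natDegree := by
      rw [natDegree_comp, hX1, mul_one]
    have hcne : p.comp (X + 1) ≠ 0 := by
      intro h
      apply hp
      rw [← leadingCoeff_eq_zero, ← hlc, h, leadingCoeff_zero]
    have hdeg : (p.comp (X + 1)).degree = p.degree := by
      rw [degree_eq_natDegree hcne, degree_eq_natDegree hp, hnd]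
    have := degree_sub_lt hdeg hcne hlc
    rw [hdeg] at this
    exact natDegree_lt_natDegree hz (by exact this)

lemma fdiff_iterate_eq_zero : ∀ (j : ℕ) (p : Polynomial ℂ), p.natDegree < j → fdiff^[j] p = 0 := by
  intro j
  induction j with
  | zero => intro p hp; omega
  | succ j ih =>
    intro p hp
    rw [Function.iterate_succ_apply]
    rcases fdiff_small p with h | h
    · rw [h]; exact Function.iterate_fixed fdiff_zero j
    · exact ih _ (by omega)

lemma fdiff_iterate_Spol (R : Polynomial ℂ) (d j : ℕ) (hR : R.natDegree = d)
    (hj : d + 2 ≤ j) : fdiff^[j] (Spol R) = 0 := by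
  apply fdiff_iterate_eq_zero
  have h1 : (Spol R).natDegree ≤ d + 1 := by
    calc (Spol R).natDegree ≤ (R.comp (X - 1)).natDegree + (X : Polynomial ℂ).natDegree :=
          natDegree_mul_le
    _ ≤ d + 1 := by
        rw [natDegree_X]
        have : (R.comp (X - 1)).natDegree ≤ d := by
          calc (R.comp (X-1)).natDegree ≤ R.natDegree * (X - 1 : Polynomial ℂ).natDegree :=
            natDegree_comp_le
          _ ≤ d := by
              have : (X - 1 : Polynomial ℂ).natDegree ≤ 1 := by
                have h := natDegree_X_sub_C (1:ℂ)
                simp only [map_one] at h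
                rw [h]
              nlinarith [this, hR.le]
        omega
  omega

lemma Icc_one_eq_Ico (t : ℕ) : Icc 1 t = Ico 1 (t+1) := by ext x; simp [Nat.lt_succ_iff]

lemma prod_Icc_one (t : ℕ) (f : ℕ → ℂ) : ∏ k ∈ Icc 1 t, f k = ∏ i ∈ range t, f (1+i) := by
  rw [Icc_one_eq_Ico, Finset.prod_Ico_eq_prod_range]
  exact Finset.prod_congr (by rw [Nat.add_sub_cancel]) fun i _ => rfl

lemma sum_Icc_one (t : ℕ) (f : ℕ → ℂ) : ∑ k ∈ Icc 1 t, f k = ∑ i ∈ range t, f (1+i) := by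
  rw [Icc_one_eq_Ico, Finset.sum_Ico_eq_sum_range]
  exact Finset.sum_congr (by rw [Nat.add_sub_cancel]) fun i _ => rfl

lemma sum_shift (N j : ℕ) (f : ℕ → Polynomial ℂ) :
    ∑ m ∈ range (N+1), (if j ≤ m then f (m - j) else 0) = ∑ i ∈ range (N+1-j), f i := by
  rw [Finset.sum_ite, Finset.sum_const_zero, add_zero]
  have : Finset.filter (fun m => j ≤ m) (range (N+1)) = Ico j (N+1) := by
    ext a; simp [Nat.lt_succ_iff]; tauto
  rw [this, Finset.sum_Ico_eq_sum_range]
  exact Finset.sum_congr rfl fun i _ => by congr 1; omega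


lemma cCoeff_eq (R : Polynomial ℂ) (n j : ℕ) (hj1 : 1 ≤ j) (hjn : j ≤ n + 1) :
    cCoeff R j n = (-1:ℂ)^j * ((j.factorial : ℂ))⁻¹ * (∏ k ∈ range (j-1), Sv R (n - k))
      * (fdiff^[j] (Spol R)).eval (((n + 1 - j : ℕ) : ℂ)) := by
  rw [cCoeff, div_eq_mul_inv]
  have harg : ((n + 1 - j : ℕ) : ℂ) = (n : ℂ) - j + 1 := by
    have : ((n + 1 - j : ℕ) : ℂ) = ((n + 1 : ℕ) : ℂ) - (j : ℂ) := by
      rw [Nat.cast_sub hjn]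
    rw [this]; push_cast; ring
  rw [harg]
  have hprod : (∏ k ∈ Icc 1 (j - 1), (((n : ℂ) - k + 1) * R.eval ((n : ℂ) - k)))
      = ∏ k ∈ range (j-1), Sv R (n - k) := by
    rw [prod_Icc_one]
    refine Finset.prod_congr rfl fun i hi => ?_
    have hin : i + 1 ≤ n := by
      have := mem_range.mp hi
      omega
    have hc : ((n - i : ℕ) : ℂ) = (n : ℂ) - i := Nat.cast_sub (by omega)
    rw [Sv, Spol, eval_mul, eval_comp]
    simp only [eval_sub, eval_X, eval_one, hc]
    push_cast
    ring
  rw [hprod]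

/-- summand in the Newton expansion -/
def Vco (R : Polynomial ℂ) (m n : ℕ) (j : ℕ) : ℂ :=
  (-1:ℂ)^j * (m.choose j : ℂ) * (fdiff^[j] (Spol R)).eval (((n+1 : ℕ) : ℂ) - j)

lemma sum_range_eq_head_Icc (t : ℕ) (f : ℕ → ℂ) :
    ∑ j ∈ range (t+1), f j = f 0 + ∑ j ∈ Icc 1 t, f j := by
  rw [sum_Icc_one, Finset.sum_range_succ' f t, add_comm]
  congr 1
  exact Finset.sum_congr rfl fun i _ => by rw [Nat.add_comm]

lemma star (R : Polynomial ℂ) (d : ℕ) (hR : R.natDegree = d) (n m : ℕ) (hm : m ≤ n + 1) :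
    aco R n m = aco R (n+1) m
      + ∑ j ∈ Icc 1 (d+1), (if j ≤ m then cCoeff R j n * aco R (n+1-j) (m-j) else 0) := by
  cases m with
  | zero =>
    have hz : ∀ j ∈ Icc 1 (d+1),
        (if j ≤ 0 then cCoeff R j n * aco R (n+1-j) (0-j) else 0) = 0 := by
      intro j hj
      rw [if_neg]
      have := (mem_Icc.mp hj).1
      omega
    rw [Finset.sum_congr rfl hz, Finset.sum_const_zero]
    simp [aco]
  | succ m' =>
    set q : ℂ := ∏ k ∈ range m', Sv R (n - k) with hq
    have hm' : m' ≤ n := by omega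
    have hA : aco R n (m'+1) = (((m'+1).factorial : ℂ))⁻¹ * (q * Sv R (n - m')) := by
      rw [aco, prod_range_succ]
    have hB : aco R (n+1) (m'+1) = (((m'+1).factorial : ℂ))⁻¹ * (q * Sv R (n+1)) := by
      rw [aco, prod_range_succ']
      have hk : ∀ k : ℕ, n + 1 - (k+1) = n - k := fun k => by omega
      simp only [hk, Nat.sub_zero]
      rw [hq]
    have hC : ∀ j ∈ Icc 1 (d+1),
        (if j ≤ m'+1 then cCoeff R j n * aco R (n+1-j) (m'+1-j) else 0)
          = ((((m'+1).factorial : ℂ))⁻¹ * q) * Vco R (m'+1) n j := by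
      intro j hj
      obtain ⟨hj1, hjd⟩ := mem_Icc.mp hj
      by_cases hjm : j ≤ m'+1
      · rw [if_pos hjm, cCoeff_eq R n j hj1 (le_trans hjm hm), aco]
        have hmerge : (∏ k ∈ range (j-1), Sv R (n - k))
            * ∏ k ∈ range (m'+1-j), Sv R (n+1-j - k) = q := by
          have hsplit := Finset.prod_range_add (fun k => Sv R (n - k)) (j-1) (m'+1-j)
          have he : j - 1 + (m'+1-j) = m' := by omega
          rw [he] at hsplit
          rw [hq, hsplit]
          congr 1
          refine Finset.prod_congr rfl fun i _ => ?_
          congr 1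
          omega
        have hD : ((n + 1 - j : ℕ) : ℂ) = ((n+1:ℕ):ℂ) - j := Nat.cast_sub (by omega)
        have hfact : ((j.factorial : ℂ))⁻¹ * (((m'+1-j).factorial : ℂ))⁻¹
            = (((m'+1).factorial : ℂ))⁻¹ * (((m'+1).choose j : ℕ) : ℂ) := by
          have h := Nat.choose_mul_factorial_mul_factorial hjm
          have h1 : (j.factorial : ℂ) ≠ 0 := Nat.cast_ne_zero.mpr (Nat.factorial_ne_zero _)
          have h2 : (((m'+1-j).factorial : ℂ)) ≠ 0 := Nat.cast_ne_zero.mpr (Nat.factorial_ne_zero _)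
          have h3 : (((m'+1).factorial : ℂ)) ≠ 0 := Nat.cast_ne_zero.mpr (Nat.factorial_ne_zero _)
          field_simp
          rw [← h]
          push_cast
          ring
        rw [hD, Vco]
        calc (-1:ℂ)^j * ((j.factorial : ℂ))⁻¹ * (∏ k ∈ range (j-1), Sv R (n - k))
              * (fdiff^[j] (Spol R)).eval (((n+1:ℕ):ℂ) - j)
              * ((((m'+1-j).factorial : ℂ))⁻¹ * ∏ k ∈ range (m'+1-j), Sv R (n+1-j - k))
            = (((j.factorial : ℂ))⁻¹ * (((m'+1-j).factorial : ℂ))⁻¹)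
              * ((∏ k ∈ range (j-1), Sv R (n - k)) * ∏ k ∈ range (m'+1-j), Sv R (n+1-j - k))
              * ((-1:ℂ)^j * (fdiff^[j] (Spol R)).eval (((n+1:ℕ):ℂ) - j)) := by ring
          _ = _ := by
              rw [hmerge, hfact]
              ring
      · rw [if_neg hjm]
        have : (m'+1).choose j = 0 := Nat.choose_eq_zero_of_lt (by omega)
        simp [Vco, this]
    rw [hA, hB, Finset.sum_congr rfl hC, ← Finset.mul_sum]
    have hnewton := newton (Spol R) (m'+1) (((n+1:ℕ)):ℂ)
    have hLHS : (Spol R).eval ((((n+1:ℕ)):ℂ) - ((m'+1 : ℕ):ℂ)) = Sv R (n - m') := by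
      rw [Sv]
      congr 1
      rw [Nat.cast_sub hm']
      push_cast
      ring
    have hnewton2 : Sv R (n - m')
        = Vco R (m'+1) n 0 + ∑ j ∈ Icc 1 (m'+1), Vco R (m'+1) n j := by
      rw [← hLHS, hnewton, ← sum_range_eq_head_Icc (m'+1) (Vco R (m'+1) n)]
      exact Finset.sum_congr rfl fun j _ => by rw [Vco]
    have hV0 : Vco R (m'+1) n 0 = Sv R (n+1) := by
      simp [Vco, Sv]
    have hIcc : ∑ j ∈ Icc 1 (m'+1), Vco R (m'+1) n j
        = ∑ j ∈ Icc 1 (d+1), Vco R (m'+1) n j := by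
      have e1 : ∑ j ∈ Icc 1 (m'+1), Vco R (m'+1) n j
          = ∑ j ∈ Icc 1 (max (m'+1) (d+1)), Vco R (m'+1) n j := by
        refine Finset.sum_subset (Finset.Icc_subset_Icc_right (le_max_left _ _)) ?_
        intro j hjM hj
        have h1 : 1 ≤ j := (mem_Icc.mp hjM).1
        have h2 : m' + 1 < j := by
          by_contra hcon
          exact hj (mem_Icc.mpr ⟨h1, by omega⟩)
        have : (m'+1).choose j = 0 := Nat.choose_eq_zero_of_lt h2
        simp [Vco, this]
      have e2 : ∑ j ∈ Icc 1 (d+1), Vco R (m'+1) n j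
          = ∑ j ∈ Icc 1 (max (m'+1) (d+1)), Vco R (m'+1) n j := by
        refine Finset.sum_subset (Finset.Icc_subset_Icc_right (le_max_right _ _)) ?_
        intro j hjM hj
        have h1 : 1 ≤ j := (mem_Icc.mp hjM).1
        have h2 : d + 1 < j := by
          by_contra hcon
          exact hj (mem_Icc.mpr ⟨h1, by omega⟩)
        have : fdiff^[j] (Spol R) = 0 := fdiff_iterate_Spol R d j hR (by omega)
        simp [Vco, this]
      rw [e1, e2]
    rw [hnewton2, hV0, hIcc]
    ring

lemma PRz_nat (R : Polynomial ℂ) (n : ℕ) : PRz R (n : ℤ) = PR R n := by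
  rw [PRz, if_neg (by omega)]
  simp

lemma PRz_shift (R : Polynomial ℂ) (n j : ℕ) :
    PRz R ((n : ℤ) - j + 1) = if j ≤ n + 1 then PR R (n+1-j) else 0 := by
  by_cases h : j ≤ n + 1
  · rw [if_pos h, PRz, if_neg (by omega)]
    congr 1
    omega
  · rw [if_neg h, PRz, if_pos (by omega)]

lemma per_j (R : Polynomial ℂ) (n j : ℕ) (hj : 1 ≤ j) :
    cCoeff R j n • PRz R ((n : ℤ) - j + 1)
      = ∑ m ∈ range (n+2), (if j ≤ m ∧ j ≤ n+1
          then (cCoeff R j n * aco R (n+1-j) (m-j)) • (X : Polynomial ℂ)^(n+1-m) else 0) := by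
  rw [PRz_shift]
  by_cases h : j ≤ n + 1
  · rw [if_pos h, PR_eq, Finset.smul_sum]
    have hrw : ∀ m ∈ range (n+2), (if j ≤ m ∧ j ≤ n+1
          then (cCoeff R j n * aco R (n+1-j) (m-j)) • (X : Polynomial ℂ)^(n+1-m) else 0)
        = (if j ≤ m then (cCoeff R j n * aco R (n+1-j) (m-j)) • (X : Polynomial ℂ)^(n+1-j-(m-j)) else 0) := by
      intro m hm
      have hm2 : m ≤ n + 1 := by
        have := mem_range.mp hm
        omega
      by_cases hjm : j ≤ m
      · rw [if_pos ⟨hjm, h⟩, if_pos hjm]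
        congr 2
        omega
      · rw [if_neg (fun hc => hjm hc.1), if_neg hjm]
    rw [Finset.sum_congr rfl hrw,
      sum_shift (n+1) j (fun i => (cCoeff R j n * aco R (n+1-j) i) • (X : Polynomial ℂ)^(n+1-j-i))]
    have : n + 2 - j = n + 1 - j + 1 := by omega
    rw [this]
    exact Finset.sum_congr rfl fun i _ => by rw [smul_smul]
  · rw [if_neg h, smul_zero]
    symm
    refine Finset.sum_eq_zero fun m hm => ?_
    rw [if_neg (fun hc => h hc.2)]

theorem PR_recurrence (R : Polynomial ℂ) (d : ℕ) (hR : R.natDegree = d) (n : ℕ) :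
    X * PRz R n = PRz R (n + 1)
      + ∑ j ∈ Icc 1 (d + 1), cCoeff R j n • PRz R ((n : ℤ) - j + 1) := by
  have hcast : ((n : ℤ) + 1) = ((n + 1 : ℕ) : ℤ) := by push_cast; ring
  rw [hcast, PRz_nat, PRz_nat]
  -- LHS
  have hLHS : X * PR R n = ∑ m ∈ range (n+2), aco R n m • (X : Polynomial ℂ)^(n+1-m) := by
    rw [PR_eq, Finset.mul_sum, Finset.sum_range_succ _ (n+1)]
    have htop : aco R n (n+1) = 0 := by
      rw [aco, prod_range_succ]
      simp [Sv_zero]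
    rw [htop, zero_smul, add_zero]
    refine Finset.sum_congr rfl fun m hm => ?_
    have hm2 : m ≤ n := by
      have := mem_range.mp hm
      omega
    rw [mul_smul_comm, ← pow_succ']
    congr 2
    omega
  rw [hLHS, PR_eq R (n+1)]
  have hstar : ∀ m ∈ range (n+2), aco R n m • (X : Polynomial ℂ)^(n+1-m)
      = aco R (n+1) m • (X : Polynomial ℂ)^(n+1-m)
        + ∑ j ∈ Icc 1 (d+1), (if j ≤ m ∧ j ≤ n+1
            then (cCoeff R j n * aco R (n+1-j) (m-j)) • (X : Polynomial ℂ)^(n+1-m) else 0) := by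
    intro m hm
    have hm2 : m ≤ n + 1 := by
      have := mem_range.mp hm
      omega
    rw [star R d hR n m hm2, add_smul, Finset.sum_smul]
    congr 1
    refine Finset.sum_congr rfl fun j hj => ?_
    rw [ite_smul, zero_smul]
    by_cases hjm : j ≤ m
    · rw [if_pos hjm, if_pos ⟨hjm, le_trans hjm hm2⟩]
    · rw [if_neg hjm, if_neg (fun hc => hjm hc.1)]
  rw [Finset.sum_congr rfl hstar, Finset.sum_add_distrib]
  congr 1
  rw [Finset.sum_comm]
  exact Finset.sum_congr rfl fun j hj => (per_j R n j (mem_Icc.mp hj).1).symm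
end
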